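/- Under Assumptions 1–3, let N ≥ d (with d ≥ 1) and ε ∈ (0,1), and define the optimal uniform level-set bound α*(ε) := sup { α ≥ 0 : p_N(α) ≤ ε } (with sup of the empty set equal to 0). Then ℙ^N{ ω ∈ Δ^N : J* ≤ g_N(ω) + α*(ε) } ≥ ε. -/

import Mathlib

open MeasureTheory Set Filter Topology

/-- Scenario optimal value `g_N(ω) = inf { c·x : x ∈ X, f(x, δ_i) ≤ 0, i = 1,…,N }`. -/
noncomputable def scenVal {d m N : ℕ} (X : Set (EuclideanSpace ℝ (Fin d)))
    (c : EuclideanSpace ℝ (Fin d))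
    (f : EuclideanSpace ℝ (Fin d) → EuclideanSpace ℝ (Fin m) → ℝ)
    (ω : Fin N → EuclideanSpace ℝ (Fin m)) : ℝ :=
  sInf ((fun x => ∑ i, c i * x i) '' {x ∈ X | ∀ i, f x (ω i) ≤ 0})

/-- Robust optimal value `J* = inf { c·x : x ∈ X, f(x,δ) ≤ 0 for all δ ∈ Δ }`. -/
noncomputable def robustVal {d m : ℕ} (X : Set (EuclideanSpace ℝ (Fin d)))
    (c : EuclideanSpace ℝ (Fin d))
    (f : EuclideanSpace ℝ (Fin d) → EuclideanSpace ℝ (Fin m) → ℝ)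
    (Δ : Set (EuclideanSpace ℝ (Fin m))) : ℝ :=
  sInf ((fun x => ∑ i, c i * x i) '' {x ∈ X | ∀ δ ∈ Δ, f x δ ≤ 0})

/-- Tail probability `p_N(α) = ℙ^N { ω ∈ Δ^N : J* − α ≤ g_N(ω) }`. -/
noncomputable def tailProb {d m : ℕ} (X : Set (EuclideanSpace ℝ (Fin d)))
    (c : EuclideanSpace ℝ (Fin d))
    (f : EuclideanSpace ℝ (Fin d) → EuclideanSpace ℝ (Fin m) → ℝ)
    (Δ : Set (EuclideanSpace ℝ (Fin m)))
    (ℙ : Measure (EuclideanSpace ℝ (Fin m))) (N : ℕ) (α : ℝ) : ENNReal :=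
  (Measure.pi fun _ : Fin N => ℙ)
    {ω : Fin N → EuclideanSpace ℝ (Fin m) |
      (∀ i, ω i ∈ Δ) ∧ robustVal X c f Δ - α ≤ scenVal X c f ω}


section Aux

variable {d m N : ℕ} {X : Set (EuclideanSpace ℝ (Fin d))} {c : EuclideanSpace ℝ (Fin d)}
  {f : EuclideanSpace ℝ (Fin d) → EuclideanSpace ℝ (Fin m) → ℝ}
  {Δ : Set (EuclideanSpace ℝ (Fin m))}

lemma lin_cont : Continuous fun x : EuclideanSpace ℝ (Fin d) => ∑ i, c i * x i := by
  fun_prop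

/-- The scenario value is bounded below by the inf over X. -/
lemma scen_lb (hXcomp : IsCompact X)
    (x0 : EuclideanSpace ℝ (Fin d)) (hx0X : x0 ∈ X) (hx0 : ∀ δ ∈ Δ, f x0 δ ≤ 0)
    (ω : Fin N → EuclideanSpace ℝ (Fin m)) (hω : ∀ i, ω i ∈ Δ) :
    sInf ((fun x : EuclideanSpace ℝ (Fin d) => ∑ i, c i * x i) '' X) ≤ scenVal X c f ω := by
  refine csInf_le_csInf ((hXcomp.image lin_cont).bddBelow)
    ⟨_, ⟨x0, ⟨hx0X, fun i => hx0 _ (hω i)⟩, rfl⟩⟩ ?_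
  exact image_mono (sep_subset _ _)

/-- Relative openness of strict superlevel sets of the scenario value on `Δ^N`. -/
lemma scen_open_superlevel
    (hlsc : LowerSemicontinuousOn (Function.uncurry f) (X ×ˢ Δ))
    (hXcomp : IsCompact X)
    (x0 : EuclideanSpace ℝ (Fin d)) (hx0X : x0 ∈ X) (hx0 : ∀ δ ∈ Δ, f x0 δ ≤ 0)
    (t : ℝ) (ω : Fin N → EuclideanSpace ℝ (Fin m)) (hω : ∀ i, ω i ∈ Δ)
    (ht : t < scenVal X c f ω) :
    ∃ U, IsOpen U ∧ ω ∈ U ∧ ∀ ω', ω' ∈ U → (∀ i, ω' i ∈ Δ) → t < scenVal X c f ω' := by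
  by_contra hcon
  push_neg at hcon
  have hstep : ∀ k : ℕ, ∃ ω' : Fin N → EuclideanSpace ℝ (Fin m),
      dist ω' ω < 1 / (k + 1) ∧ (∀ i, ω' i ∈ Δ) ∧ scenVal X c f ω' ≤ t := by
    intro k
    obtain ⟨ω', hU, hΔ', hle⟩ := hcon (Metric.ball ω (1 / (k + 1))) Metric.isOpen_ball
      (Metric.mem_ball_self (by positivity))
    exact ⟨ω', Metric.mem_ball.1 hU, hΔ', hle⟩
  choose ωs hdist hωsΔ hωse using hstep
  -- pick near-optimal feasible points
  have hxk : ∀ k : ℕ, ∃ x : EuclideanSpace ℝ (Fin d),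
      x ∈ X ∧ (∀ i, f x (ωs k i) ≤ 0) ∧ (∑ i, c i * x i) < t + 1 / (k + 1) := by
    intro k
    have hne : ((fun x : EuclideanSpace ℝ (Fin d) => ∑ i, c i * x i) ''
        {x ∈ X | ∀ i, f x (ωs k i) ≤ 0}).Nonempty :=
      ⟨_, ⟨x0, ⟨hx0X, fun i => hx0 _ (hωsΔ k i)⟩, rfl⟩⟩
    have hlt : scenVal X c f (ωs k) < t + 1 / (k + 1) :=
      lt_of_le_of_lt (hωse k) (by simp only [lt_add_iff_pos_right]; positivity)
    obtain ⟨y, ⟨x, hx, rfl⟩, hy⟩ := exists_lt_of_csInf_lt hne hlt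
    exact ⟨x, hx.1, hx.2, hy⟩
  choose xs hxsX hxsf hxslin using hxk
  obtain ⟨x, hxX, φ, hφ, hlim⟩ := hXcomp.isSeqCompact hxsX
  -- ωs → ω
  have hωlim : Tendsto ωs atTop (𝓝 ω) := by
    rw [tendsto_iff_dist_tendsto_zero]
    exact squeeze_zero (fun k => dist_nonneg) (fun k => (hdist k).le)
      tendsto_one_div_add_atTop_nhds_zero_nat
  have hωφlim : Tendsto (fun j => ωs (φ j)) atTop (𝓝 ω) := hωlim.comp hφ.tendsto_atTop
  -- the limit x is feasible for ω
  have hxf : ∀ i, f x (ω i) ≤ 0 := by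
    intro i
    by_contra hpos
    push_neg at hpos
    have hev := hlsc (x, ω i) ⟨hxX, hω i⟩ 0 hpos
    have htend : Tendsto (fun j => (xs (φ j), ωs (φ j) i)) atTop
        (𝓝[X ×ˢ Δ] (x, ω i)) := by
      refine tendsto_nhdsWithin_of_tendsto_nhds_of_eventually_within _ ?_ ?_
      · exact hlim.prodMk_nhds (((continuous_apply i).tendsto ω).comp hωφlim)
      · exact Eventually.of_forall fun j => ⟨hxsX (φ j), hωsΔ (φ j) i⟩
    obtain ⟨j, hj⟩ := (htend.eventually hev).exists
    exact absurd hj (not_lt.2 (hxsf (φ j) i))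
  -- the limit value is at most t
  have hlin : (∑ i, c i * x i) ≤ t := by
    have h1 : Tendsto (fun j => ∑ i, c i * xs (φ j) i) atTop (𝓝 (∑ i, c i * x i)) :=
      (lin_cont.tendsto x).comp hlim
    have h2 : Tendsto (fun j : ℕ => t + 1 / (j + 1 : ℝ)) atTop (𝓝 (t + 0)) :=
      tendsto_const_nhds.add tendsto_one_div_add_atTop_nhds_zero_nat
    rw [add_zero] at h2
    refine le_of_tendsto_of_tendsto' h1 h2 fun j => ?_
    refine le_trans (hxslin (φ j)).le (add_le_add_right ?_ t)
    apply one_div_le_one_div_of_le (by positivity)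
    have : j ≤ φ j := hφ.le_apply
    exact add_le_add_left (by exact_mod_cast this) 1
  have : scenVal X c f ω ≤ t := by
    refine le_trans (csInf_le ?_ ⟨x, ⟨hxX, hxf⟩, rfl⟩) hlin
    exact ((hXcomp.image lin_cont).bddBelow).mono (image_mono (sep_subset _ _))
  exact absurd ht (not_lt.2 this)

lemma setD_meas (hΔmeas : MeasurableSet Δ) :
    MeasurableSet {ω : Fin N → EuclideanSpace ℝ (Fin m) | ∀ i, ω i ∈ Δ} := by
  have : {ω : Fin N → EuclideanSpace ℝ (Fin m) | ∀ i, ω i ∈ Δ} = Set.pi univ fun _ => Δ := by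
    ext ω; simp [Set.mem_pi]
  rw [this]; exact MeasurableSet.univ_pi fun _ => hΔmeas

/-- Measurability of the level-set events. -/
lemma meas_E
    (hlsc : LowerSemicontinuousOn (Function.uncurry f) (X ×ˢ Δ))
    (hXcomp : IsCompact X)
    (x0 : EuclideanSpace ℝ (Fin d)) (hx0X : x0 ∈ X) (hx0 : ∀ δ ∈ Δ, f x0 δ ≤ 0)
    (hΔmeas : MeasurableSet Δ) (s : ℝ) :
    MeasurableSet {ω : Fin N → EuclideanSpace ℝ (Fin m) |
      (∀ i, ω i ∈ Δ) ∧ s ≤ scenVal X c f ω} := by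
  have hrel : ∀ r : ℝ, MeasurableSet {ω : Fin N → EuclideanSpace ℝ (Fin m) |
      (∀ i, ω i ∈ Δ) ∧ r < scenVal X c f ω} := by
    intro r
    set A := {ω : Fin N → EuclideanSpace ℝ (Fin m) | (∀ i, ω i ∈ Δ) ∧ r < scenVal X c f ω}
      with hA
    have hch : ∀ ω : A, ∃ U, IsOpen U ∧ (ω : Fin N → EuclideanSpace ℝ (Fin m)) ∈ U ∧
        ∀ ω', ω' ∈ U → (∀ i, ω' i ∈ Δ) → r < scenVal X c f ω' :=
      fun ω => scen_open_superlevel (c := c) hlsc hXcomp x0 hx0X hx0 r ω.1 ω.2.1 ω.2.2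
    choose U hUo hUm hUp using hch
    have hAeq : A = {ω | ∀ i, ω i ∈ Δ} ∩ ⋃ ω : A, U ω := by
      ext ω'
      constructor
      · intro h
        exact ⟨h.1, mem_iUnion.2 ⟨⟨ω', h⟩, hUm _⟩⟩
      · rintro ⟨hΔ', hU⟩
        obtain ⟨ω₀, h₀⟩ := mem_iUnion.1 hU
        exact ⟨hΔ', hUp ω₀ _ h₀ hΔ'⟩
    rw [hAeq]
    exact (setD_meas hΔmeas).inter (isOpen_iUnion hUo).measurableSet
  have heq : {ω : Fin N → EuclideanSpace ℝ (Fin m) | (∀ i, ω i ∈ Δ) ∧ s ≤ scenVal X c f ω}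
      = ⋂ n : ℕ, {ω | (∀ i, ω i ∈ Δ) ∧ s - 1/(n+1) < scenVal X c f ω} := by
    ext ω
    simp only [mem_setOf_eq, mem_iInter]
    constructor
    · rintro ⟨h1, h2⟩ n
      refine ⟨h1, lt_of_lt_of_le ?_ h2⟩
      simp only [sub_lt_self_iff]
      positivity
    · intro h
      refine ⟨(h 0).1, ?_⟩
      by_contra hlt
      push_neg at hlt
      obtain ⟨n, hn⟩ := exists_nat_one_div_lt (sub_pos.2 hlt)
      have := (h n).2
      linarith
  rw [heq]
  exact MeasurableSet.iInter fun n => hrel _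

end Aux

/-- Under Assumptions 1–3, with N ≥ d (d ≥ 1), ε ∈ (0,1), and the optimal uniform
level-set bound α*(ε) = sup { α ≥ 0 : p_N(α) ≤ ε } (sup ∅ = 0), one has
ℙ^N { ω ∈ Δ^N : J* ≤ g_N(ω) + α*(ε) } ≥ ε. -/
theorem stmt_6 {d m : ℕ} (hd : 1 ≤ d)
    (X : Set (EuclideanSpace ℝ (Fin d))) (c : EuclideanSpace ℝ (Fin d))
    (Δ : Set (EuclideanSpace ℝ (Fin m))) (hΔne : Δ.Nonempty)
    (f : EuclideanSpace ℝ (Fin d) → EuclideanSpace ℝ (Fin m) → ℝ)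
    -- Assumption 1
    (hlsc : LowerSemicontinuousOn (Function.uncurry f) (X ×ˢ Δ))
    (hXcomp : IsCompact X)
    -- Assumption 2
    (hfeas : ∃ x ∈ X, ∀ δ ∈ Δ, f x δ ≤ 0)
    -- Assumption 3
    (hXconv : Convex ℝ X)
    (hconv : ∀ δ ∈ Δ, ConvexOn ℝ X fun x => f x δ)
    -- probability measure supported on Δ
    (ℙ : Measure (EuclideanSpace ℝ (Fin m))) [IsProbabilityMeasure ℙ]
    (hΔmeas : MeasurableSet Δ) (hΔone : ℙ Δ = 1)
    (N : ℕ) (hN : d ≤ N) (ε : ℝ) (hε : ε ∈ Set.Ioo (0 : ℝ) 1)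
    (αstar : ℝ)
    (hαstar : αstar =
      sSup {α : ℝ | 0 ≤ α ∧ tailProb X c f Δ ℙ N α ≤ ENNReal.ofReal ε}) :
    ENNReal.ofReal ε ≤
      (Measure.pi fun _ : Fin N => ℙ)
        {ω : Fin N → EuclideanSpace ℝ (Fin m) |
          (∀ i, ω i ∈ Δ) ∧ robustVal X c f Δ ≤ scenVal X c f ω + αstar} := by
  obtain ⟨x0, hx0X, hx0⟩ := hfeas
  set μ : Measure (Fin N → EuclideanSpace ℝ (Fin m)) := Measure.pi fun _ : Fin N => ℙ with hμ
  set J : ℝ := robustVal X c f Δ with hJ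
  set S : Set ℝ := {α : ℝ | 0 ≤ α ∧ tailProb X c f Δ ℙ N α ≤ ENNReal.ofReal ε} with hS
  -- rewrite goal
  have hgoal : {ω : Fin N → EuclideanSpace ℝ (Fin m) |
        (∀ i, ω i ∈ Δ) ∧ J ≤ scenVal X c f ω + αstar}
      = {ω : Fin N → EuclideanSpace ℝ (Fin m) |
        (∀ i, ω i ∈ Δ) ∧ J - αstar ≤ scenVal X c f ω} := by
    ext ω; simp only [mem_setOf_eq, sub_le_iff_le_add]
  rw [hgoal]
  have hptail : ∀ α : ℝ, tailProb X c f Δ ℙ N α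
      = μ {ω | (∀ i, ω i ∈ Δ) ∧ J - α ≤ scenVal X c f ω} := fun α => rfl
  have hμD : μ {ω : Fin N → EuclideanSpace ℝ (Fin m) | ∀ i, ω i ∈ Δ} = 1 := by
    have hset : {ω : Fin N → EuclideanSpace ℝ (Fin m) | ∀ i, ω i ∈ Δ}
        = Set.pi univ fun _ => Δ := by ext ω; simp [Set.mem_pi]
    rw [hμ, hset, Measure.pi_pi]
    simp [hΔone]
  have hεlt1 : ENNReal.ofReal ε < 1 := ENNReal.ofReal_lt_one.2 hε.2
  have key : ∀ α : ℝ, 0 ≤ α → α ∉ S → ENNReal.ofReal ε < tailProb X c f Δ ℙ N α := by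
    intro α h0 hnot
    by_contra hle
    exact hnot ⟨h0, not_lt.1 hle⟩
  by_cases hSne : S.Nonempty
  · -- S nonempty : bounded above, use continuity from above
    have hub : ∀ α ∈ S, α ≤ J - sInf ((fun x : EuclideanSpace ℝ (Fin d) => ∑ i, c i * x i) '' X) := by
      intro α hα
      by_contra hgt
      push_neg at hgt
      have hsub : {ω : Fin N → EuclideanSpace ℝ (Fin m) | ∀ i, ω i ∈ Δ}
          ⊆ {ω | (∀ i, ω i ∈ Δ) ∧ J - α ≤ scenVal X c f ω} := by
        intro ω hω
        refine ⟨hω, ?_⟩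
        have := scen_lb (c := c) hXcomp x0 hx0X hx0 ω hω
        linarith
      have h1 : (1 : ENNReal) ≤ tailProb X c f Δ ℙ N α := by
        rw [hptail]
        exact hμD ▸ measure_mono hsub
      exact absurd (lt_of_le_of_lt (h1.trans hα.2) hεlt1) (lt_irrefl _)
    have hbdd : BddAbove S := ⟨_, hub⟩
    have hαsup : αstar = sSup S := hαstar
    obtain ⟨a, ha⟩ := hSne
    have hα0 : 0 ≤ αstar := le_trans ha.1 (hαsup ▸ le_csSup hbdd ha)
    set E : ℕ → Set (Fin N → EuclideanSpace ℝ (Fin m)) := fun n =>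
      {ω | (∀ i, ω i ∈ Δ) ∧ J - (αstar + 1/(n+1)) ≤ scenVal X c f ω} with hE
    have hmeas : ∀ n, MeasurableSet (E n) := fun n =>
      meas_E hlsc hXcomp x0 hx0X hx0 hΔmeas _
    have hanti : Antitone E := by
      intro n k hnk ω hω
      refine ⟨hω.1, le_trans ?_ hω.2⟩
      have h1 : (1 : ℝ)/(k+1) ≤ 1/(n+1) := by
        apply one_div_le_one_div_of_le (by positivity)
        exact add_le_add_left (by exact_mod_cast hnk) 1
      linarith
    have hfin : μ (E 0) ≠ ⊤ := by
      exact ne_top_of_le_ne_top (by simp) (measure_mono (subset_univ _))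
    have htend := tendsto_measure_iInter_atTop (μ := μ)
      (fun n => (hmeas n).nullMeasurableSet) hanti ⟨0, hfin⟩
    have hlow : ∀ n : ℕ, ENNReal.ofReal ε ≤ μ (E n) := by
      intro n
      have hpos : (0:ℝ) < 1/(n+1) := by positivity
      have hnot : αstar + 1/(n+1) ∉ S := by
        intro hmem
        have := le_csSup hbdd hmem
        rw [← hαsup] at this
        linarith
      have := key _ (by linarith) hnot
      rw [hptail] at this
      exact this.le
    have hι : ENNReal.ofReal ε ≤ μ (⋂ n, E n) :=
      ge_of_tendsto htend (Eventually.of_forall hlow)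
    have hIeq : (⋂ n, E n) = {ω : Fin N → EuclideanSpace ℝ (Fin m) |
        (∀ i, ω i ∈ Δ) ∧ J - αstar ≤ scenVal X c f ω} := by
      ext ω
      simp only [hE, mem_iInter, mem_setOf_eq]
      constructor
      · intro h
        refine ⟨(h 0).1, ?_⟩
        by_contra hlt
        push_neg at hlt
        obtain ⟨n, hn⟩ := exists_nat_one_div_lt (sub_pos.2 hlt)
        have := (h n).2
        linarith
      · rintro ⟨h1, h2⟩ n
        refine ⟨h1, le_trans ?_ h2⟩
        have : (0:ℝ) < 1/(n+1) := by positivity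
        linarith
    rwa [hIeq] at hι
  · -- S empty : αstar = 0 and p(0) > ε
    have hα0 : αstar = 0 := by
      rw [hαstar, not_nonempty_iff_eq_empty.1 hSne, Real.sSup_empty]
    have h0not : (0:ℝ) ∉ S := by
      rw [not_nonempty_iff_eq_empty.1 hSne]; exact notMem_empty _
    have := key 0 le_rfl h0not
    rw [hptail] at this
    rw [hα0]
    exact this.le
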